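/- Let t ≥ 1, let R be a d×t random matrix whose entries are i.i.d., each equal to +1/√t or −1/√t with probability 1/2, let C ∈ ℝ^{n×d} be a nonzero real matrix, and let ε > 0. Then Prob[ |‖CR‖_F² − ‖C‖_F²| ≥ ε‖C‖_F² ] ≤ 2/(t·ε²). In particular, with probability at least 1 − 2/(t·ε²), ‖CR‖_F ≤ √(1+ε)·‖C‖_F. -/

import Mathlib

open MeasureTheory
open scoped Matrix

/-- Frobenius norm of a real matrix. -/
noncomputable def frobNorm {m n : ℕ} (M : Matrix (Fin m) (Fin n) ℝ) : ℝ :=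
  Real.sqrt (∑ i, ∑ j, (M i j) ^ 2)

/-- Spectral (operator) norm of a real matrix, viewed as a linear map between
Euclidean spaces. -/
noncomputable def specNorm {m n : ℕ} (M : Matrix (Fin m) (Fin n) ℝ) : ℝ :=
  ‖LinearMap.toContinuousLinearMap (Matrix.toEuclideanLin M)‖

/-- `P` is the Moore–Penrose pseudoinverse of `M` (the four Penrose conditions;
such a `P` is unique). -/
def IsMoorePenrose {m n : ℕ} (M : Matrix (Fin m) (Fin n) ℝ)
    (P : Matrix (Fin n) (Fin m) ℝ) : Prop :=
  M * P * M = M ∧ P * M * P = P ∧ (M * P)ᵀ = M * P ∧ (P * M)ᵀ = P * M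

/-- `X` is an `n × k` cluster indicator matrix: each row `i` has a single nonzero
entry, in column `f i`, equal to `1/√(z_{f i})` where `z_j` is the number of rows
assigned to column `j`. -/
def IsIndicator {n k : ℕ} (X : Matrix (Fin n) (Fin k) ℝ) : Prop :=
  ∃ f : Fin n → Fin k, ∀ i j, X i j =
    if f i = j then 1 / Real.sqrt ((Finset.univ.filter fun i' => f i' = j).card) else 0

/-- The singular values of a `k × t` real matrix `M` (in some order): the square
roots of the eigenvalues of `M * Mᵀ`. -/
noncomputable def singVals {k t : ℕ} (M : Matrix (Fin k) (Fin t) ℝ) (i : Fin k) : ℝ :=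
  Real.sqrt ((Matrix.isHermitian_mul_conjTranspose_self M).eigenvalues i)

/-- The `d × t` random sign matrix with entries `±1/√t`, as a function of the
sample point `ω` (a `d × t` array of fair coins). -/
noncomputable def signMatrix (d t : ℕ) (ω : Fin d → Fin t → Bool) :
    Matrix (Fin d) (Fin t) ℝ :=
  Matrix.of fun i j => (if ω i j then (1 : ℝ) else -1) / Real.sqrt t

/-- The law of a `d × t` matrix of i.i.d. fair signs: the uniform probability
measure on all `d × t` sign patterns. -/
noncomputable def signMeasure (d t : ℕ) : Measure (Fin d → Fin t → Bool) :=
  (PMF.uniformOfFintype (Fin d → Fin t → Bool)).toMeasure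

namespace St10Aux

open Finset

noncomputable def rr (b : Bool) : ℝ := if b then 1 else -1

lemma rr_sq (b : Bool) : rr b * rr b = 1 := by cases b <;> norm_num [rr]

lemma rr_not (b : Bool) : rr (!b) = - rr b := by cases b <;> norm_num [rr]

variable {d t : ℕ}

abbrev Om (d t : ℕ) := Fin d → Fin t → Bool

noncomputable def EE (P : Fin d × Fin t) (ω : Om d t) : ℝ := rr (ω P.1 P.2)

def flip (a : Fin d) (b : Fin t) (ω : Om d t) : Om d t :=
  Function.update ω a (Function.update (ω a) b (!ω a b))

lemma flip_apply (a : Fin d) (b : Fin t) (ω : Om d t) (k : Fin d) (l : Fin t) :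
    flip a b ω k l = if k = a ∧ l = b then !ω k l else ω k l := by
  unfold flip
  by_cases hk : k = a
  · subst hk
    rw [Function.update_self]
    by_cases hl : l = b
    · subst hl; simp
    · simp [Function.update_of_ne hl, hl]
  · simp [Function.update_of_ne hk, hk]

lemma flip_invol (a : Fin d) (b : Fin t) : Function.Involutive (flip a b) := by
  intro ω; funext k l
  by_cases h : k = a ∧ l = b <;> simp [flip_apply, h]

lemma sum_flip_neg (a : Fin d) (b : Fin t) (F : Om d t → ℝ)
    (h : ∀ ω, F (flip a b ω) = -F ω) : ∑ ω : Om d t, F ω = 0 := by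
  have h1 : ∑ ω : Om d t, F (flip a b ω) = ∑ ω : Om d t, F ω :=
    Fintype.sum_bijective _ (flip_invol a b).bijective _ _ fun ω => rfl
  have h2 : ∑ ω : Om d t, F (flip a b ω) = -∑ ω : Om d t, F ω := by
    simp [h]
  linarith

lemma EE_flip (P Q : Fin d × Fin t) (ω : Om d t) :
    EE P (flip Q.1 Q.2 ω) = if P = Q then -EE P ω else EE P ω := by
  unfold EE
  rw [flip_apply]
  by_cases h : P = Q
  · subst h; simp [rr_not]
  · have h' : ¬(P.1 = Q.1 ∧ P.2 = Q.2) := by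
      intro hc; exact h (Prod.ext hc.1 hc.2)
    rw [if_neg h', if_neg h]

lemma key4_zero (P1 P2 P3 P4 : Fin d × Fin t) (h2 : P1 ≠ P2) (h3 : P1 ≠ P3)
    (h4 : P1 ≠ P4) :
    ∑ ω : Om d t, EE P1 ω * EE P2 ω * EE P3 ω * EE P4 ω = 0 := by
  apply sum_flip_neg P1.1 P1.2
  intro ω
  rw [EE_flip P1 P1, EE_flip P2 P1, EE_flip P3 P1, EE_flip P4 P1,
    if_pos rfl, if_neg h2.symm, if_neg h3.symm, if_neg h4.symm]
  ring

lemma key4 (P1 P2 P3 P4 : Fin d × Fin t) (h12 : P1 ≠ P2) (h34 : P3 ≠ P4) :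
    ∑ ω : Om d t, EE P1 ω * EE P2 ω * EE P3 ω * EE P4 ω =
      if (P1 = P3 ∧ P2 = P4) ∨ (P1 = P4 ∧ P2 = P3)
        then (Fintype.card (Om d t) : ℝ) else 0 := by
  by_cases hp : (P1 = P3 ∧ P2 = P4) ∨ (P1 = P4 ∧ P2 = P3)
  · rw [if_pos hp]
    have hone : ∀ ω : Om d t, EE P1 ω * EE P2 ω * EE P3 ω * EE P4 ω = 1 := by
      intro ω
      rcases hp with ⟨h13, h24⟩ | ⟨h14, h23⟩
      · subst h13; subst h24
        have a := rr_sq (ω P1.1 P1.2)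
        have b := rr_sq (ω P2.1 P2.2)
        unfold EE
        linear_combination (rr (ω P2.1 P2.2) * rr (ω P2.1 P2.2)) * a + b
      · subst h14; subst h23
        have a := rr_sq (ω P1.1 P1.2)
        have b := rr_sq (ω P2.1 P2.2)
        unfold EE
        linear_combination (rr (ω P2.1 P2.2) * rr (ω P2.1 P2.2)) * a + b
    rw [Finset.sum_congr rfl (fun ω _ => hone ω), Finset.sum_const, Finset.card_univ,
      nsmul_eq_mul, mul_one]
  · rw [if_neg hp]
    push_neg at hp
    by_cases h13 : P1 = P3
    · have h24 : P2 ≠ P4 := hp.1 h13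
      have h23 : P2 ≠ P3 := by rw [← h13]; exact h12.symm
      calc ∑ ω : Om d t, EE P1 ω * EE P2 ω * EE P3 ω * EE P4 ω
          = ∑ ω : Om d t, EE P2 ω * EE P1 ω * EE P3 ω * EE P4 ω := by
            refine Finset.sum_congr rfl fun ω _ => by ring
        _ = 0 := key4_zero P2 P1 P3 P4 h12.symm h23 h24
    · by_cases h14 : P1 = P4
      · have h23 : P2 ≠ P3 := hp.2 h14
        have h24 : P2 ≠ P4 := by rw [← h14]; exact h12.symm
        calc ∑ ω : Om d t, EE P1 ω * EE P2 ω * EE P3 ω * EE P4 ω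
            = ∑ ω : Om d t, EE P2 ω * EE P1 ω * EE P3 ω * EE P4 ω := by
              refine Finset.sum_congr rfl fun ω _ => by ring
          _ = 0 := key4_zero P2 P1 P3 P4 h12.symm h23 h24
      · exact key4_zero P1 P2 P3 P4 h12 h13 h14

end St10Aux

namespace St10Aux

variable {n d t : ℕ}

noncomputable def Am (C : Matrix (Fin n) (Fin d) ℝ) (k k' : Fin d) : ℝ := ∑ i, C i k * C i k'

noncomputable def Mu (C : Matrix (Fin n) (Fin d) ℝ) : ℝ := ∑ i, ∑ k, C i k ^ 2

noncomputable def Yv (C : Matrix (Fin n) (Fin d) ℝ) (ω : Om d t) : ℝ :=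
  ∑ l : Fin t, ∑ p ∈ (Finset.univ : Finset (Fin d)).offDiag,
    Am C p.1 p.2 * (rr (ω p.1 l) * rr (ω p.2 l))

lemma Am_symm (C : Matrix (Fin n) (Fin d) ℝ) (k k' : Fin d) : Am C k k' = Am C k' k :=
  Finset.sum_congr rfl fun i _ => mul_comm _ _

lemma Mu_trace (C : Matrix (Fin n) (Fin d) ℝ) : Mu C = ∑ k, Am C k k := by
  unfold Mu Am
  rw [Finset.sum_comm]
  exact Finset.sum_congr rfl fun k _ => Finset.sum_congr rfl fun i _ => (sq (C i k)).symm ▸ (sq (C i k))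

lemma expand (C : Matrix (Fin n) (Fin d) ℝ) (ω : Om d t) :
    (∑ i, ∑ l, (∑ k, C i k * rr (ω k l)) ^ 2) = t * Mu C + Yv C ω := by
  have key : ∀ l : Fin t, ∑ i, (∑ k, C i k * rr (ω k l)) ^ 2
      = ∑ k, ∑ k', Am C k k' * (rr (ω k l) * rr (ω k' l)) := by
    intro l
    simp only [sq, Finset.sum_mul_sum]
    rw [Finset.sum_comm]
    refine Finset.sum_congr rfl fun k _ => ?_
    rw [Finset.sum_comm]
    refine Finset.sum_congr rfl fun k' _ => ?_
    rw [Am, Finset.sum_mul]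
    exact Finset.sum_congr rfl fun i _ => by ring
  calc (∑ i, ∑ l, (∑ k, C i k * rr (ω k l)) ^ 2)
      = ∑ l : Fin t, ∑ i, (∑ k, C i k * rr (ω k l)) ^ 2 := Finset.sum_comm
    _ = ∑ l : Fin t, ∑ k, ∑ k', Am C k k' * (rr (ω k l) * rr (ω k' l)) :=
        Finset.sum_congr rfl fun l _ => key l
    _ = ∑ l : Fin t, (Mu C + ∑ p ∈ (Finset.univ : Finset (Fin d)).offDiag,
          Am C p.1 p.2 * (rr (ω p.1 l) * rr (ω p.2 l))) := by
        refine Finset.sum_congr rfl fun l _ => ?_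
        have hp := Finset.sum_product' (s := (Finset.univ : Finset (Fin d)))
          (t := (Finset.univ : Finset (Fin d)))
          (f := fun k k' => Am C k k' * (rr (ω k l) * rr (ω k' l)))
        rw [← hp, ← Finset.diag_union_offDiag,
          Finset.sum_union (Finset.disjoint_diag_offDiag _), Finset.sum_diag]
        congr 1
        rw [Mu_trace]
        exact Finset.sum_congr rfl fun k _ => by rw [rr_sq, mul_one]
    _ = t * Mu C + Yv C ω := by
        rw [Finset.sum_add_distrib, Finset.sum_const, Finset.card_univ, Fintype.card_fin,
          nsmul_eq_mul]
        rfl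

end St10Aux

namespace St10Aux

variable {n d t : ℕ}

lemma sum_Am_sq_le (C : Matrix (Fin n) (Fin d) ℝ) :
    ∑ p ∈ (Finset.univ : Finset (Fin d)).offDiag, Am C p.1 p.2 ^ 2 ≤ Mu C ^ 2 := by
  have h1 : ∑ p ∈ (Finset.univ : Finset (Fin d)).offDiag, Am C p.1 p.2 ^ 2
      ≤ ∑ p ∈ (Finset.univ ×ˢ Finset.univ : Finset (Fin d × Fin d)), Am C p.1 p.2 ^ 2 := by
    refine Finset.sum_le_sum_of_subset_of_nonneg ?_ fun p _ _ => sq_nonneg _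
    intro p hp
    rw [Finset.mem_offDiag] at hp
    exact Finset.mem_product.2 ⟨hp.1, hp.2.1⟩
  refine h1.trans ?_
  rw [Finset.sum_product' (f := fun k k' => Am C k k' ^ 2)]
  have h2 : ∀ k k' : Fin d, Am C k k' ^ 2 ≤ (∑ i, C i k ^ 2) * (∑ i, C i k' ^ 2) :=
    fun k k' => Finset.sum_mul_sq_le_sq_mul_sq _ _ _
  calc ∑ k, ∑ k', Am C k k' ^ 2
      ≤ ∑ k, ∑ k', (∑ i, C i k ^ 2) * (∑ i, C i k' ^ 2) :=
        Finset.sum_le_sum fun k _ => Finset.sum_le_sum fun k' _ => h2 k k'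
    _ = (∑ k, ∑ i, C i k ^ 2) * (∑ k', ∑ i, C i k' ^ 2) := by
        rw [Finset.sum_mul_sum]
    _ = Mu C ^ 2 := by rw [sq, Mu, Finset.sum_comm]

lemma sum_Yv_sq (C : Matrix (Fin n) (Fin d) ℝ) :
    ∑ ω : Om d t, Yv C ω ^ 2 ≤ (Fintype.card (Om d t) : ℝ) * (2 * t * Mu C ^ 2) := by
  classical
  set s : Finset (Fin t × Fin d × Fin d) :=
    Finset.univ ×ˢ (Finset.univ : Finset (Fin d)).offDiag with hs
  have hY : ∀ ω : Om d t, Yv C ω = ∑ x ∈ s, Am C x.2.1 x.2.2 *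
      (EE (x.2.1, x.1) ω * EE (x.2.2, x.1) ω) := by
    intro ω
    rw [hs, Finset.sum_product (s := Finset.univ) (t := Finset.univ.offDiag)
      (f := fun x : Fin t × Fin d × Fin d =>
      Am C x.2.1 x.2.2 * (EE (x.2.1, x.1) ω * EE (x.2.2, x.1) ω))]
    rfl
  have step1 : ∑ ω : Om d t, Yv C ω ^ 2 = ∑ x ∈ s, ∑ y ∈ s,
      (Am C x.2.1 x.2.2 * Am C y.2.1 y.2.2) *
        ∑ ω : Om d t, EE (x.2.1, x.1) ω * EE (x.2.2, x.1) ω * EE (y.2.1, y.1) ω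
          * EE (y.2.2, y.1) ω := by
    calc ∑ ω : Om d t, Yv C ω ^ 2
        = ∑ ω : Om d t, ∑ x ∈ s, ∑ y ∈ s,
            (Am C x.2.1 x.2.2 * Am C y.2.1 y.2.2) *
              (EE (x.2.1, x.1) ω * EE (x.2.2, x.1) ω * EE (y.2.1, y.1) ω
                * EE (y.2.2, y.1) ω) := by
          refine Finset.sum_congr rfl fun ω _ => ?_
          rw [hY ω, sq, Finset.sum_mul_sum]
          exact Finset.sum_congr rfl fun x _ => Finset.sum_congr rfl fun y _ => by ring
      _ = ∑ x ∈ s, ∑ ω : Om d t, ∑ y ∈ s, _ := Finset.sum_comm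
      _ = ∑ x ∈ s, ∑ y ∈ s, ∑ ω : Om d t,
            (Am C x.2.1 x.2.2 * Am C y.2.1 y.2.2) *
              (EE (x.2.1, x.1) ω * EE (x.2.2, x.1) ω * EE (y.2.1, y.1) ω
                * EE (y.2.2, y.1) ω) :=
          Finset.sum_congr rfl fun x _ => Finset.sum_comm
      _ = _ := by
          refine Finset.sum_congr rfl fun x _ => Finset.sum_congr rfl fun y _ => ?_
          rw [Finset.mul_sum]
  have hmem : ∀ x : Fin t × Fin d × Fin d, x ∈ s → x.2.1 ≠ x.2.2 := by
    intro x hx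
    rw [hs, Finset.mem_product, Finset.mem_offDiag] at hx
    exact hx.2.2.2
  have step2 : ∀ x ∈ s, (∑ y ∈ s,
      (Am C x.2.1 x.2.2 * Am C y.2.1 y.2.2) *
        ∑ ω : Om d t, EE (x.2.1, x.1) ω * EE (x.2.2, x.1) ω * EE (y.2.1, y.1) ω
          * EE (y.2.2, y.1) ω)
      = (Fintype.card (Om d t) : ℝ) * (2 * Am C x.2.1 x.2.2 ^ 2) := by
    intro x hx
    have hxne := hmem x hx
    have hcond : ∀ y ∈ s, (Am C x.2.1 x.2.2 * Am C y.2.1 y.2.2) *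
        (∑ ω : Om d t, EE (x.2.1, x.1) ω * EE (x.2.2, x.1) ω * EE (y.2.1, y.1) ω
          * EE (y.2.2, y.1) ω)
        = if y ∈ ({(x.1, x.2.1, x.2.2), (x.1, x.2.2, x.2.1)} :
            Finset (Fin t × Fin d × Fin d)) then
            (Am C x.2.1 x.2.2 * Am C y.2.1 y.2.2) * (Fintype.card (Om d t) : ℝ) else 0 := by
      intro y hy
      have hyne := hmem y hy
      rw [key4 _ _ _ _ (by simp [Prod.ext_iff, hxne]) (by simp [Prod.ext_iff, hyne])]
      have hiff : ((x.2.1, x.1) = (y.2.1, y.1) ∧ (x.2.2, x.1) = (y.2.2, y.1)) ∨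
          ((x.2.1, x.1) = (y.2.2, y.1) ∧ (x.2.2, x.1) = (y.2.1, y.1)) ↔
          (y ∈ ({(x.1, x.2.1, x.2.2), (x.1, x.2.2, x.2.1)} :
            Finset (Fin t × Fin d × Fin d))) := by
        obtain ⟨yl, y1, y2⟩ := y
        obtain ⟨xl, x1, x2⟩ := x
        simp only [Finset.mem_insert, Finset.mem_singleton, Prod.mk.injEq]
        constructor
        · rintro (⟨⟨a, b⟩, ⟨c, e⟩⟩ | ⟨⟨a, b⟩, ⟨c, e⟩⟩)
          · exact Or.inl ⟨b.symm, a.symm, c.symm⟩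
          · exact Or.inr ⟨b.symm, c.symm, a.symm⟩
        · rintro (⟨a, b, c⟩ | ⟨a, b, c⟩)
          · exact Or.inl ⟨⟨b.symm, a.symm⟩, ⟨c.symm, a.symm⟩⟩
          · exact Or.inr ⟨⟨c.symm, a.symm⟩, ⟨b.symm, a.symm⟩⟩
      rw [if_congr hiff rfl rfl, mul_ite, mul_zero]
    rw [Finset.sum_congr rfl hcond, Finset.sum_ite_mem]
    have hsub : ({(x.1, x.2.1, x.2.2), (x.1, x.2.2, x.2.1)} :
        Finset (Fin t × Fin d × Fin d)) ⊆ s := by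
      intro y hy
      rw [Finset.mem_insert, Finset.mem_singleton] at hy
      rcases hy with h | h <;> subst h <;>
        · rw [hs, Finset.mem_product, Finset.mem_offDiag]
          simp [hxne, hxne.symm]
    rw [Finset.inter_eq_right.2 hsub]
    have hne2 : ((x.1, x.2.1, x.2.2) : Fin t × Fin d × Fin d) ≠ (x.1, x.2.2, x.2.1) := by
      simp [Prod.ext_iff, hxne]
    rw [Finset.sum_pair hne2]
    have := Am_symm C x.2.1 x.2.2
    ring_nf
    rw [Am_symm C x.2.2 x.2.1]
    ring
  calc ∑ ω : Om d t, Yv C ω ^ 2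
      = ∑ x ∈ s, (Fintype.card (Om d t) : ℝ) * (2 * Am C x.2.1 x.2.2 ^ 2) := by
        rw [step1]; exact Finset.sum_congr rfl step2
    _ = (Fintype.card (Om d t) : ℝ) * (2 * (t *
          ∑ p ∈ (Finset.univ : Finset (Fin d)).offDiag, Am C p.1 p.2 ^ 2)) := by
        rw [hs, Finset.sum_product (s := Finset.univ) (t := Finset.univ.offDiag)
          (f := fun x : Fin t × Fin d × Fin d =>
          (Fintype.card (Om d t) : ℝ) * (2 * Am C x.2.1 x.2.2 ^ 2))]
        have h1 : (∑ x : Fin t, ∑ y ∈ (Finset.univ : Finset (Fin d)).offDiag,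
            (Fintype.card (Om d t) : ℝ) * (2 * Am C (x, y).2.1 (x, y).2.2 ^ 2))
            = ∑ _x : Fin t, ∑ y ∈ (Finset.univ : Finset (Fin d)).offDiag,
            (Fintype.card (Om d t) : ℝ) * (2 * Am C y.1 y.2 ^ 2) := rfl
        have h2 : ∑ y ∈ (Finset.univ : Finset (Fin d)).offDiag,
            (Fintype.card (Om d t) : ℝ) * (2 * Am C y.1 y.2 ^ 2)
            = (Fintype.card (Om d t) : ℝ) * 2 *
              ∑ y ∈ (Finset.univ : Finset (Fin d)).offDiag, Am C y.1 y.2 ^ 2 := by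
          rw [Finset.mul_sum]
          exact Finset.sum_congr rfl fun y _ => by ring
        rw [h1, Finset.sum_const, Finset.card_univ, Fintype.card_fin, nsmul_eq_mul, h2]
        ring
    _ ≤ (Fintype.card (Om d t) : ℝ) * (2 * t * Mu C ^ 2) := by
        have h := sum_Am_sq_le C
        rw [show (Fintype.card (Om d t) : ℝ) * (2 * (t:ℝ) * Mu C ^ 2)
          = (Fintype.card (Om d t) : ℝ) * (2 * ((t:ℝ) * Mu C ^ 2)) from by ring]
        gcongr

end St10Aux

namespace St10Aux

variable {n d t : ℕ}

lemma frob_nonneg {m n : ℕ} (M : Matrix (Fin m) (Fin n) ℝ) : 0 ≤ frobNorm M :=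
  Real.sqrt_nonneg _

lemma frob_sq {m n : ℕ} (M : Matrix (Fin m) (Fin n) ℝ) :
    frobNorm M ^ 2 = ∑ i, ∑ j, M i j ^ 2 := by
  rw [frobNorm, Real.sq_sqrt]
  positivity

lemma frobC_sq (C : Matrix (Fin n) (Fin d) ℝ) : frobNorm C ^ 2 = Mu C := frob_sq C

lemma Mu_pos (C : Matrix (Fin n) (Fin d) ℝ) (hC : C ≠ 0) : 0 < Mu C := by
  have h : ∃ i k, C i k ≠ 0 := by
    by_contra h
    push_neg at h
    exact hC (by ext i k; simpa using h i k)
  obtain ⟨i, k, hik⟩ := h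
  have h1 : C i k ^ 2 ≤ ∑ k', C i k' ^ 2 :=
    Finset.single_le_sum (f := fun k' => C i k' ^ 2) (fun _ _ => sq_nonneg _)
      (Finset.mem_univ k)
  have h2 : ∑ k', C i k' ^ 2 ≤ Mu C :=
    Finset.single_le_sum (f := fun i => ∑ k', C i k' ^ 2)
      (fun _ _ => Finset.sum_nonneg fun _ _ => sq_nonneg _) (Finset.mem_univ i)
  have := pow_pos (abs_pos.2 hik) 2
  nlinarith [sq_abs (C i k)]

lemma frobCR (ht : 1 ≤ t) (C : Matrix (Fin n) (Fin d) ℝ) (ω : Om d t) :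
    frobNorm (C * signMatrix d t ω) ^ 2 = Mu C + Yv C ω / t := by
  have htR : (0:ℝ) < t := by exact_mod_cast ht
  rw [frob_sq]
  have entry : ∀ (i : Fin n) (l : Fin t), (C * signMatrix d t ω) i l
      = (∑ k, C i k * rr (ω k l)) / Real.sqrt t := by
    intro i l
    rw [Matrix.mul_apply, Finset.sum_div]
    refine Finset.sum_congr rfl fun k _ => ?_
    rw [mul_div_assoc]
    rfl
  calc ∑ i, ∑ l, ((C * signMatrix d t ω) i l) ^ 2
      = ∑ i, ∑ l, (∑ k, C i k * rr (ω k l)) ^ 2 / t := by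
        refine Finset.sum_congr rfl fun i _ => Finset.sum_congr rfl fun l _ => ?_
        rw [entry, div_pow, Real.sq_sqrt htR.le]
    _ = (∑ i, ∑ l, (∑ k, C i k * rr (ω k l)) ^ 2) / t := by
        simp only [← Finset.sum_div]
    _ = (t * Mu C + Yv C ω) / t := by rw [expand]
    _ = Mu C + Yv C ω / t := by field_simp
end St10Aux


open scoped ENNReal in
/-- Chebyshev bound for the Frobenius norm after projection. -/
theorem statement10 (d t n : ℕ) (ht : 1 ≤ t) (C : Matrix (Fin n) (Fin d) ℝ)
    (hC : C ≠ 0) (ε : ℝ) (hε : 0 < ε) :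
    signMeasure d t
        {ω | ε * frobNorm C ^ 2 ≤ |frobNorm (C * signMatrix d t ω) ^ 2 - frobNorm C ^ 2|}
      ≤ ENNReal.ofReal (2 / ((t : ℝ) * ε ^ 2)) ∧
    ENNReal.ofReal (1 - 2 / ((t : ℝ) * ε ^ 2)) ≤
      signMeasure d t
        {ω | frobNorm (C * signMatrix d t ω) ≤ Real.sqrt (1 + ε) * frobNorm C} := by
  classical
  have htR : (0:ℝ) < t := by exact_mod_cast ht
  set B : Set (St10Aux.Om d t) :=
    {ω | ε * frobNorm C ^ 2 ≤ |frobNorm (C * signMatrix d t ω) ^ 2 - frobNorm C ^ 2|}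
    with hB
  have hmeaset : ∀ s : Set (St10Aux.Om d t), MeasurableSet s := fun s =>
    (Set.to_countable s).measurableSet
  have hMu := St10Aux.Mu_pos C hC
  have hfC := St10Aux.frobC_sq C
  have hdiff : ∀ ω, frobNorm (C * signMatrix d t ω) ^ 2 - frobNorm C ^ 2
      = St10Aux.Yv C ω / t := by
    intro ω; rw [St10Aux.frobCR ht C ω, hfC]; ring
  set N := Fintype.card (St10Aux.Om d t) with hN
  set K := (Finset.univ.filter (fun ω => ω ∈ B)).card with hK
  have hcheb : (K:ℝ) * (ε * St10Aux.Mu C) ^ 2 ≤ (N:ℝ) * (2 * St10Aux.Mu C ^ 2 / t) := by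
    have h1 : ∀ ω ∈ Finset.univ.filter (fun ω => ω ∈ B),
        (ε * St10Aux.Mu C) ^ 2 ≤ (St10Aux.Yv C ω / t) ^ 2 := by
      intro ω hω
      rw [Finset.mem_filter] at hω
      have h2 : ε * St10Aux.Mu C ≤ |St10Aux.Yv C ω / t| := by
        have h3 := hω.2
        rw [hB, Set.mem_setOf_eq, hdiff ω, hfC] at h3
        exact h3
      calc (ε * St10Aux.Mu C) ^ 2 ≤ |St10Aux.Yv C ω / t| ^ 2 :=
            pow_le_pow_left₀ (by positivity) h2 2
        _ = (St10Aux.Yv C ω / t) ^ 2 := sq_abs _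
    calc (K:ℝ) * (ε * St10Aux.Mu C) ^ 2
        = ∑ _ω ∈ Finset.univ.filter (fun ω => ω ∈ B), (ε * St10Aux.Mu C) ^ 2 := by
          rw [Finset.sum_const, nsmul_eq_mul, hK]
      _ ≤ ∑ ω ∈ Finset.univ.filter (fun ω => ω ∈ B), (St10Aux.Yv C ω / t) ^ 2 :=
          Finset.sum_le_sum h1
      _ ≤ ∑ ω : St10Aux.Om d t, (St10Aux.Yv C ω / t) ^ 2 :=
          Finset.sum_le_sum_of_subset_of_nonneg (Finset.filter_subset _ _)
            (fun _ _ _ => sq_nonneg _)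
      _ = (∑ ω : St10Aux.Om d t, St10Aux.Yv C ω ^ 2) / (t:ℝ)^2 := by
          simp only [div_pow, ← Finset.sum_div]
      _ ≤ ((N:ℝ) * (2 * t * St10Aux.Mu C ^ 2)) / (t:ℝ)^2 := by
          gcongr
          exact St10Aux.sum_Yv_sq C
      _ = (N:ℝ) * (2 * St10Aux.Mu C ^ 2 / t) := by field_simp
  have hK2 : (K:ℝ) ≤ (N:ℝ) * (2 / ((t:ℝ) * ε ^ 2)) := by
    rw [show (N:ℝ) * (2 / ((t:ℝ) * ε ^ 2))
        = ((N:ℝ) * (2 * St10Aux.Mu C ^ 2 / t)) / (ε * St10Aux.Mu C) ^ 2 from by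
      field_simp]
    exact (le_div_iff₀ (by positivity)).mpr hcheb
  have hN0 : (N : ℝ≥0∞) ≠ 0 := by
    simp [hN, Fintype.card_ne_zero]
  have hNtop : (N : ℝ≥0∞) ≠ ⊤ := ENNReal.natCast_ne_top _
  have goal1 : signMeasure d t B ≤ ENNReal.ofReal (2 / ((t:ℝ) * ε ^ 2)) := by
    rw [signMeasure, PMF.toMeasure_apply_fintype]
    have hind : ∀ ω : St10Aux.Om d t,
        B.indicator (⇑(PMF.uniformOfFintype (St10Aux.Om d t))) ω
        = if ω ∈ B then ((N : ℝ≥0∞))⁻¹ else 0 := by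
      intro ω
      rw [Set.indicator_apply]
      split <;> simp [PMF.uniformOfFintype_apply, hN]
    rw [Finset.sum_congr rfl fun ω _ => hind ω, Finset.sum_ite, Finset.sum_const,
      Finset.sum_const_zero, add_zero, nsmul_eq_mul]
    rw [← div_eq_mul_inv, ENNReal.div_le_iff_le_mul (Or.inl hN0) (Or.inl hNtop)]
    calc ((Finset.univ.filter (fun ω => ω ∈ B)).card : ℝ≥0∞)
        = ENNReal.ofReal (K:ℝ) := by rw [ENNReal.ofReal_natCast, hK]
      _ ≤ ENNReal.ofReal (2 / ((t:ℝ) * ε ^ 2) * (N:ℝ)) :=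
          ENNReal.ofReal_le_ofReal (by rw [mul_comm]; exact hK2)
      _ = ENNReal.ofReal (2 / ((t:ℝ) * ε ^ 2)) * ENNReal.ofReal (N:ℝ) :=
          ENNReal.ofReal_mul (by positivity)
      _ = ENNReal.ofReal (2 / ((t:ℝ) * ε ^ 2)) * (N : ℝ≥0∞) := by
          rw [ENNReal.ofReal_natCast]
  refine ⟨goal1, ?_⟩
  haveI : IsProbabilityMeasure (signMeasure d t) :=
    PMF.toMeasure.isProbabilityMeasure _
  have hsub : Bᶜ ⊆ {ω | frobNorm (C * signMatrix d t ω) ≤ Real.sqrt (1 + ε) * frobNorm C} := by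
    intro ω hω
    simp only [Set.mem_compl_iff, hB, Set.mem_setOf_eq, not_le] at hω
    rw [hdiff ω, hfC] at hω
    have hlt : frobNorm (C * signMatrix d t ω) ^ 2 ≤ (1 + ε) * St10Aux.Mu C := by
      have h4 := (abs_lt.1 hω).2
      rw [St10Aux.frobCR ht C ω]
      nlinarith
    have h0 : frobNorm (C * signMatrix d t ω)
        = Real.sqrt (frobNorm (C * signMatrix d t ω) ^ 2) :=
      (Real.sqrt_sq (St10Aux.frob_nonneg _)).symm
    show frobNorm (C * signMatrix d t ω) ≤ Real.sqrt (1 + ε) * frobNorm C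
    rw [h0]
    calc Real.sqrt (frobNorm (C * signMatrix d t ω) ^ 2)
        ≤ Real.sqrt ((1 + ε) * St10Aux.Mu C) := Real.sqrt_le_sqrt hlt
      _ = Real.sqrt (1 + ε) * Real.sqrt (St10Aux.Mu C) := Real.sqrt_mul (by positivity) _
      _ = Real.sqrt (1 + ε) * frobNorm C := by
          rw [← hfC, Real.sqrt_sq (St10Aux.frob_nonneg C)]
  calc ENNReal.ofReal (1 - 2 / ((t:ℝ) * ε ^ 2))
      = 1 - ENNReal.ofReal (2 / ((t:ℝ) * ε ^ 2)) := by
        rw [ENNReal.ofReal_sub _ (by positivity), ENNReal.ofReal_one]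
    _ ≤ 1 - signMeasure d t B := tsub_le_tsub_left goal1 1
    _ = signMeasure d t Bᶜ := (prob_compl_eq_one_sub (hmeaset B)).symm
    _ ≤ signMeasure d t _ := measure_mono hsub
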